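/- arXiv:2007.09538 — 2 statements merged into one kernel-verified Lean document; each statement's English description precedes it below -/
import Mathlib

section
/- Let H₁, H₂ be real Hilbert spaces, r₀ = r₂ = 1, and r₁ a positive integer. Let Ψ₁, Ψ̃₁ be 1 × r₁ row vectors with entries in H₁ and Ψ₂, Ψ̃₂ be r₁ × 1 column vectors with entries in H₂, such that the entries of each Ψᵢ and Ψ̃ᵢ have invertible Gram (auto-correlation) matrices (equivalently, each family of component functions is linearly independent in the appropriate sense). If Σ_{α=1}^{r₁} ψ₁(α) ⊗ ψ₂(α) = Σ_{α=1}^{r₁} ψ̃₁(α) ⊗ ψ̃₂(α) as elements of the Hilbert tensor product H₁ ⊗ H₂, then there exists an invertible r₁ × r₁ real matrix P such that Ψ₁ = Ψ̃₁ P and Ψ₂ = P⁻¹ Ψ̃₂. -/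
open scoped InnerProductSpace TensorProduct
open Matrix

private lemma inv_solve {H : Type*} [AddCommGroup H] [Module ℝ H] {r : ℕ}
    (M : Matrix (Fin r) (Fin r) ℝ) (hM : IsUnit M)
    (v w : Fin r → H) (h : ∀ β, ∑ α, M β α • v α = w β) (j : Fin r) :
    v j = ∑ β, M⁻¹ j β • w β := by
  have hinv : M⁻¹ * M = 1 := Matrix.nonsing_inv_mul M ((Matrix.isUnit_iff_isUnit_det M).mp hM)
  have : ∑ β, M⁻¹ j β • w β = ∑ α, ((M⁻¹ * M) j α) • v α := by
    simp only [← h, Finset.smul_sum, smul_smul, Matrix.mul_apply, Finset.sum_smul]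
    rw [Finset.sum_comm]
  rw [this, hinv]
  simp [Matrix.one_apply]

private noncomputable def Fr {H₁ H₂ : Type*}
    [NormedAddCommGroup H₁] [InnerProductSpace ℝ H₁]
    [NormedAddCommGroup H₂] [InnerProductSpace ℝ H₂] (g : H₂) :
    H₁ ⊗[ℝ] H₂ →ₗ[ℝ] H₁ :=
  TensorProduct.lift (LinearMap.mk₂ ℝ (fun (x : H₁) (y : H₂) => ⟪g, y⟫_ℝ • x)
    (fun x x' y => by rw [smul_add])
    (fun c x y => by rw [smul_comm])
    (fun x y y' => by rw [inner_add_right, add_smul])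
    (fun c x y => by rw [real_inner_smul_right, mul_smul]))

private noncomputable def Fl {H₁ H₂ : Type*}
    [NormedAddCommGroup H₁] [InnerProductSpace ℝ H₁]
    [NormedAddCommGroup H₂] [InnerProductSpace ℝ H₂] (f : H₁) :
    H₁ ⊗[ℝ] H₂ →ₗ[ℝ] H₂ :=
  TensorProduct.lift (LinearMap.mk₂ ℝ (fun (x : H₁) (y : H₂) => ⟪f, x⟫_ℝ • y)
    (fun x x' y => by rw [inner_add_right, add_smul])
    (fun c x y => by rw [real_inner_smul_right, mul_smul])
    (fun x y y' => by rw [smul_add])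
    (fun c x y => by rw [smul_comm]))

/-- uniqueness of rank-`r₁` representations (2D case): if
`Σ_α ψ₁(α) ⊗ ψ₂(α) = Σ_α ψ̃₁(α) ⊗ ψ̃₂(α)` and all four families have invertible Gram
matrices, then there is an invertible `r₁ × r₁` matrix `P` with `Ψ₁ = Ψ̃₁ P` and
`Ψ₂ = P⁻¹ Ψ̃₂`. -/
theorem stmt1 {H₁ H₂ : Type*}
    [NormedAddCommGroup H₁] [InnerProductSpace ℝ H₁] [CompleteSpace H₁]
    [NormedAddCommGroup H₂] [InnerProductSpace ℝ H₂] [CompleteSpace H₂]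
    (r₁ : ℕ) (hr₁ : 0 < r₁)
    (ψ₁ ψt₁ : Fin r₁ → H₁) (ψ₂ ψt₂ : Fin r₁ → H₂)
    (hG₁ : IsUnit (Matrix.of fun i j : Fin r₁ => ⟪ψ₁ i, ψ₁ j⟫_ℝ))
    (hGt₁ : IsUnit (Matrix.of fun i j : Fin r₁ => ⟪ψt₁ i, ψt₁ j⟫_ℝ))
    (hG₂ : IsUnit (Matrix.of fun i j : Fin r₁ => ⟪ψ₂ i, ψ₂ j⟫_ℝ))
    (hGt₂ : IsUnit (Matrix.of fun i j : Fin r₁ => ⟪ψt₂ i, ψt₂ j⟫_ℝ))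
    (heq : (∑ α, ψ₁ α ⊗ₜ[ℝ] ψ₂ α) = ∑ α, ψt₁ α ⊗ₜ[ℝ] ψt₂ α) :
    ∃ P : Matrix (Fin r₁) (Fin r₁) ℝ, IsUnit P ∧
      (∀ j, ψ₁ j = ∑ i, P i j • ψt₁ i) ∧
      (∀ i, ψ₂ i = ∑ j, P⁻¹ i j • ψt₂ j) := by
  -- applying ⟪g,·⟫ on the right factor
  have hright : ∀ g : H₂,
      (∑ α, ⟪g, ψ₂ α⟫_ℝ • ψ₁ α) = ∑ α, ⟪g, ψt₂ α⟫_ℝ • ψt₁ α := by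
    intro g
    have := congrArg (Fr (H₁ := H₁) g) heq
    simpa [Fr, map_sum] using this
  have hleft : ∀ f : H₁,
      (∑ α, ⟪f, ψ₁ α⟫_ℝ • ψ₂ α) = ∑ α, ⟪f, ψt₁ α⟫_ℝ • ψt₂ α := by
    intro f
    have := congrArg (Fl (H₂ := H₂) f) heq
    simpa [Fl, map_sum] using this
  set G₂ : Matrix (Fin r₁) (Fin r₁) ℝ := Matrix.of fun i j => ⟪ψ₂ i, ψ₂ j⟫_ℝ with hG₂def
  set Gt₁ : Matrix (Fin r₁) (Fin r₁) ℝ := Matrix.of fun i j => ⟪ψt₁ i, ψt₁ j⟫_ℝ with hGt₁def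
  set C : Matrix (Fin r₁) (Fin r₁) ℝ := Matrix.of fun i j => ⟪ψ₂ i, ψt₂ j⟫_ℝ with hCdef
  -- ψ₁ j = Σ_β G₂⁻¹ j β • (Σ_α C β α • ψt₁ α)
  have hψ₁ : ∀ j, ψ₁ j = ∑ α, (G₂⁻¹ * C) j α • ψt₁ α := by
    intro j
    have h := inv_solve G₂ hG₂ ψ₁ (fun β => ∑ α, C β α • ψt₁ α)
      (fun β => hright (ψ₂ β)) j
    rw [h]
    simp only [Finset.smul_sum, smul_smul, Matrix.mul_apply, Finset.sum_smul]
    rw [Finset.sum_comm]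
  set P : Matrix (Fin r₁) (Fin r₁) ℝ := (G₂⁻¹ * C)ᵀ with hPdef
  have hP1 : ∀ j, ψ₁ j = ∑ i, P i j • ψt₁ i := by
    intro j; rw [hψ₁ j]
    exact Finset.sum_congr rfl fun i _ => by rw [hPdef]; rfl
  -- now the left equation: ψt₂ k = Σ_α P k α • ψ₂ α
  have hψt₂ : ∀ k, ψt₂ k = ∑ α, P k α • ψ₂ α := by
    intro k
    have key : ∀ β, ∑ α, Gt₁ β α • ψt₂ α = ∑ α, (∑ i, P i α * Gt₁ β i) • ψ₂ α := by
      intro β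
      have h2 : ∑ α, Gt₁ β α • ψt₂ α = ∑ α, ⟪ψt₁ β, ψ₁ α⟫_ℝ • ψ₂ α := by
        simp only [hGt₁def, Matrix.of_apply]
        exact (hleft (ψt₁ β)).symm
      rw [h2]
      refine Finset.sum_congr rfl fun α _ => ?_
      congr 1
      rw [hP1 α, inner_sum]
      refine Finset.sum_congr rfl fun i _ => ?_
      rw [real_inner_smul_right, hGt₁def]
      simp only [Matrix.of_apply]
    have h := inv_solve Gt₁ hGt₁ ψt₂
      (fun β => ∑ α, (∑ i, P i α * Gt₁ β i) • ψ₂ α) key k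
    rw [h]
    have hinv : Gt₁⁻¹ * Gt₁ = 1 :=
      Matrix.nonsing_inv_mul Gt₁ ((Matrix.isUnit_iff_isUnit_det Gt₁).mp hGt₁)
    have : ∑ β, Gt₁⁻¹ k β • ∑ α, (∑ i, P i α * Gt₁ β i) • ψ₂ α
        = ∑ α, (∑ i, P i α * (Gt₁⁻¹ * Gt₁) k i) • ψ₂ α := by
      simp only [Finset.smul_sum, smul_smul]
      rw [Finset.sum_comm]
      refine Finset.sum_congr rfl fun α _ => ?_
      rw [← Finset.sum_smul]
      congr 1
      simp only [Matrix.mul_apply, Finset.mul_sum, Finset.sum_mul]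
      rw [Finset.sum_comm]
      exact Finset.sum_congr rfl fun β _ => Finset.sum_congr rfl fun i _ => by ring
    rw [this, hinv]
    refine Finset.sum_congr rfl fun α _ => ?_
    congr 1
    simp [Matrix.one_apply]
  -- P is invertible: Gt₂ = P * G₂ * Pᵀ
  have hGt₂eq : (Matrix.of fun i j : Fin r₁ => ⟪ψt₂ i, ψt₂ j⟫_ℝ) = P * G₂ * Pᵀ := by
    ext k l
    simp only [Matrix.of_apply, Matrix.mul_apply, Matrix.transpose_apply]
    rw [hψt₂ k, hψt₂ l, sum_inner]
    simp only [inner_sum, real_inner_smul_left, real_inner_smul_right, Finset.mul_sum]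
    rw [Finset.sum_comm]
    refine Finset.sum_congr rfl fun β _ => ?_
    rw [Finset.sum_mul]
    refine Finset.sum_congr rfl fun α _ => ?_
    rw [hG₂def]; simp only [Matrix.of_apply]; ring
  have hPunit : IsUnit P := by
    rw [Matrix.isUnit_iff_isUnit_det]
    have hd : IsUnit ((Matrix.of fun i j : Fin r₁ => ⟪ψt₂ i, ψt₂ j⟫_ℝ)).det :=
      (Matrix.isUnit_iff_isUnit_det _).mp hGt₂
    rw [hGt₂eq] at hd
    simp only [Matrix.det_mul, Matrix.det_transpose] at hd
    exact (isUnit_of_mul_isUnit_left (by rwa [mul_assoc] at hd))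
  refine ⟨P, hPunit, hP1, fun i => ?_⟩
  have hinv : P⁻¹ * P = 1 :=
    Matrix.nonsing_inv_mul P ((Matrix.isUnit_iff_isUnit_det P).mp hPunit)
  have : ∑ j, P⁻¹ i j • ψt₂ j = ∑ α, ((P⁻¹ * P) i α) • ψ₂ α := by
    simp only [hψt₂, Finset.smul_sum, smul_smul, Matrix.mul_apply, Finset.sum_smul]
    rw [Finset.sum_comm]
  rw [this, hinv]
  simp [Matrix.one_apply]
end

section
/- Let H₁, H₂ be separable real Hilbert spaces, u ∈ H₁ ⊗ H₂ with Schmidt decomposition u = Σ_{i=1}^∞ σ_i ψ_i ⊗ φ_i (σ₁ ≥ σ₂ ≥ ... ≥ 0, (ψ_i), (φ_i) orthonormal). Then for every r ≥ 1, the truncation u_r = Σ_{i=1}^r σ_i ψ_i ⊗ φ_i satisfies ‖u − u_r‖² = Σ_{i>r} σ_i², and u_r is a best approximation of u among all elements of H₁ ⊗ H₂ expressible as a sum of at most r elementary tensors: ‖u − u_r‖ ≤ ‖u − v‖ for every v = Σ_{j=1}^r a_j ⊗ b_j with a_j ∈ H₁, b_j ∈ H₂. -/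
open scoped InnerProductSpace

section Aux

variable {E : Type*} [NormedAddCommGroup E] [InnerProductSpace ℝ E]

/-- Coefficient extraction for an orthonormal expansion. -/
lemma ey_coeff_of_hasSum {ι : Type*} {ψ : ι → E} (hψ : Orthonormal ℝ ψ) {c : ι → ℝ} {x : E}
    (h : HasSum (fun i => c i • ψ i) x) (j : ι) : ⟪ψ j, x⟫_ℝ = c j := by
  classical
  have h1 : HasSum (fun i => ⟪ψ j, c i • ψ i⟫_ℝ) ⟪ψ j, x⟫_ℝ :=
    (innerSL ℝ (ψ j)).hasSum h
  have h2 : (fun i => ⟪ψ j, c i • ψ i⟫_ℝ) = fun i => if i = j then c j else 0 := by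
    funext i
    rw [real_inner_smul_right]
    rcases eq_or_ne i j with rfl | hij
    · simp [hψ.1 i, real_inner_self_eq_norm_sq]
    · simp [hij, hψ.2 (Ne.symm hij)]
  rw [h2] at h1
  exact h1.unique (hasSum_ite_eq j (c j))

/-- Pythagoras for orthonormal expansions. -/
lemma ey_hasSum_sq {ι : Type*} {ψ : ι → E} (hψ : Orthonormal ℝ ψ) {c : ι → ℝ} {x : E}
    (h : HasSum (fun i => c i • ψ i) x) : HasSum (fun i => c i ^ 2) (‖x‖ ^ 2) := by
  have h1 : HasSum (fun i => ⟪x, c i • ψ i⟫_ℝ) ⟪x, x⟫_ℝ := (innerSL ℝ x).hasSum h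
  have h2 : (fun i => ⟪x, c i • ψ i⟫_ℝ) = fun i => c i ^ 2 := by
    funext i
    rw [real_inner_smul_right, real_inner_comm, ey_coeff_of_hasSum hψ h i]
    ring
  rw [h2, real_inner_self_eq_norm_sq] at h1
  exact h1

/-- Parseval for a Hilbert basis. -/
lemma ey_parseval_sq (e : HilbertBasis ℕ ℝ E) (x : E) :
    HasSum (fun j => ⟪x, e j⟫_ℝ ^ 2) (‖x‖ ^ 2) := by
  have := e.hasSum_inner_mul_inner x x
  rw [real_inner_self_eq_norm_sq] at this
  convert this using 2 with j
  · rfl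
  rw [sq, real_inner_comm (e j) x]

/-- Fubini for doubly-indexed nonnegative series. -/
lemma ey_tsum_swap {f : ℕ → ℕ → ℝ} (h0 : ∀ i j, 0 ≤ f i j)
    (hrow : ∀ i, Summable (f i)) (hsum : Summable fun i => ∑' j, f i j) :
    ∑' j, ∑' i, f i j = ∑' i, ∑' j, f i j := by
  have huncur : Summable (Function.uncurry f) :=
    (summable_prod_of_nonneg (fun p => h0 p.1 p.2)).mpr ⟨hrow, hsum⟩
  refine Summable.tsum_comm' huncur hrow fun j => ?_
  exact huncur.comp_injective (fun i₁ i₂ h => by simpa using congrArg Prod.fst h :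
    Function.Injective fun i => ((i, j) : ℕ × ℕ))

/-- Rearrangement: a nonnegative antitone sequence weighted by weights in `[0,1]`
with total mass at most `r` sums to at most the sum of the first `r` terms. -/
lemma ey_rearrange (s t : ℕ → ℝ) (hs : Antitone s) (hs0 : ∀ i, 0 ≤ s i)
    (ht0 : ∀ i, 0 ≤ t i) (ht1 : ∀ i, t i ≤ 1) (htsum : Summable t)
    (hst : Summable fun i => s i * t i) (r : ℕ) (htr : ∑' i, t i ≤ r) :
    ∑' i, s i * t i ≤ ∑ i ∈ Finset.range r, s i := by
  have hsplit := (Summable.sum_add_tsum_nat_add r hst).symm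
  have htail : ∑' i, s (i + r) * t (i + r) ≤ s r * ∑' i, t (i + r) := by
    rw [← tsum_mul_left]
    refine Summable.tsum_le_tsum (fun i => ?_) (hst.comp_injective (add_left_injective r))
      ((htsum.comp_injective (add_left_injective r)).mul_left _)
    exact mul_le_mul_of_nonneg_right (hs (Nat.le_add_left r i)) (ht0 _)
  have httail : ∑' i, t (i + r) ≤ (r : ℝ) - ∑ i ∈ Finset.range r, t i := by
    have := (Summable.sum_add_tsum_nat_add r htsum).symm
    linarith [htr, this.symm ▸ htr]
  have h2 : s r * ∑' i, t (i + r) ≤ ∑ i ∈ Finset.range r, s i * (1 - t i) := by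
    calc s r * ∑' i, t (i + r) ≤ s r * ((r : ℝ) - ∑ i ∈ Finset.range r, t i) :=
          mul_le_mul_of_nonneg_left httail (hs0 r)
      _ = ∑ i ∈ Finset.range r, s r * (1 - t i) := by
          rw [Finset.sum_congr rfl (fun (i : ℕ) _ => mul_sub (s r) 1 (t i)),
            Finset.sum_sub_distrib, ← Finset.mul_sum, ← Finset.mul_sum]
          simp [mul_sub]
      _ ≤ ∑ i ∈ Finset.range r, s i * (1 - t i) := by
          refine Finset.sum_le_sum fun i hi => ?_
          exact mul_le_mul_of_nonneg_right (hs (Finset.mem_range.mp hi).le)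
            (by linarith [ht1 i])
  calc ∑' i, s i * t i
      = ∑ i ∈ Finset.range r, s i * t i + ∑' i, s (i + r) * t (i + r) := hsplit
    _ ≤ ∑ i ∈ Finset.range r, s i * t i + ∑ i ∈ Finset.range r, s i * (1 - t i) :=
        by linarith [le_trans htail h2]
    _ = ∑ i ∈ Finset.range r, s i := by
        rw [← Finset.sum_add_distrib]
        exact Finset.sum_congr rfl fun i _ => by ring

/-- Lower bound for the distance to a linear combination of an orthonormal family. -/
lemma ey_dist_sq_ge {n : ℕ} {q : Fin n → E} (hq : Orthonormal ℝ q) (x : E) (tt : Fin n → ℝ) :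
    ‖x‖ ^ 2 - ∑ k, ⟪q k, x⟫_ℝ ^ 2 ≤ ‖x - ∑ k, tt k • q k‖ ^ 2 := by
  set s := ∑ k, tt k • q k with hs
  have hns : ‖s‖ ^ 2 = ∑ k, tt k ^ 2 := by
    rw [← real_inner_self_eq_norm_sq, hs, hq.inner_sum]
    simp [sq]
  have hxs : ⟪x, s⟫_ℝ = ∑ k, tt k * ⟪q k, x⟫_ℝ := by
    rw [hs, inner_sum]
    exact Finset.sum_congr rfl fun k _ => by
      rw [real_inner_smul_right, real_inner_comm]
  rw [norm_sub_sq_real, hns, hxs]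
  have key : 0 ≤ ∑ k, (tt k - ⟪q k, x⟫_ℝ) ^ 2 :=
    Finset.sum_nonneg fun k _ => sq_nonneg _
  have expand : ∑ k, (tt k - ⟪q k, x⟫_ℝ) ^ 2
      = ∑ k, tt k ^ 2 - 2 * ∑ k, tt k * ⟪q k, x⟫_ℝ + ∑ k, ⟪q k, x⟫_ℝ ^ 2 := by
    rw [Finset.mul_sum, ← Finset.sum_sub_distrib, ← Finset.sum_add_distrib]
    exact Finset.sum_congr rfl fun k _ => by ring
  linarith [expand ▸ key]

end Aux

/-- Eckart–Young in infinite dimensions: identifying `H₁ ⊗ H₂` with the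
Hilbert–Schmidt operators `H₂ → H₁` (the Hilbert–Schmidt norm squared is
`Σ_j ‖·(e j)‖²` for a Hilbert basis `e` of `H₂`), if `u = Σ σ_i ψ_i ⊗ φ_i` is a Schmidt
decomposition, then the truncation `u_r = Σ_{i<r} σ_i ψ_i ⊗ φ_i` satisfies
`‖u − u_r‖² = Σ_{i≥r} σ_i²` and is a best approximation of `u` among all sums of at
most `r` elementary tensors `Σ_{j<r} a_j ⊗ b_j`. -/
theorem stmt10 {H₁ H₂ : Type*}
    [NormedAddCommGroup H₁] [InnerProductSpace ℝ H₁] [CompleteSpace H₁]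
    [TopologicalSpace.SeparableSpace H₁]
    [NormedAddCommGroup H₂] [InnerProductSpace ℝ H₂] [CompleteSpace H₂]
    (e : HilbertBasis ℕ ℝ H₂)
    (u : H₂ →L[ℝ] H₁) (hHS : Summable fun i => ‖u (e i)‖ ^ 2)
    (σ : ℕ → ℝ) (ψ : ℕ → H₁) (φ : ℕ → H₂)
    (hσ_mono : Antitone σ) (hσ_nonneg : ∀ i, 0 ≤ σ i)
    (hσ_sq : Summable fun i => σ i ^ 2)
    (hψ : Orthonormal ℝ ψ) (hφ : Orthonormal ℝ φ)
    (hu : ∀ g : H₂, HasSum (fun i => (σ i * ⟪φ i, g⟫_ℝ) • ψ i) (u g))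
    (r : ℕ)
    (ur : H₂ →L[ℝ] H₁)
    (hur : ∀ g : H₂, ur g = ∑ i ∈ Finset.range r, (σ i * ⟪φ i, g⟫_ℝ) • ψ i) :
    (∑' j, ‖u (e j) - ur (e j)‖ ^ 2) = (∑' i, σ (i + r) ^ 2) ∧
    ∀ (a : Fin r → H₁) (b : Fin r → H₂) (v : H₂ →L[ℝ] H₁),
      (∀ g : H₂, v g = ∑ j, ⟪b j, g⟫_ℝ • a j) →
      (∑' j, ‖u (e j) - ur (e j)‖ ^ 2) ≤ ∑' j, ‖u (e j) - v (e j)‖ ^ 2 := by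
  classical
  -- hasSum for the tail operator at each basis vector
  have hD : ∀ j, HasSum (fun i => (if i < r then 0 else σ i * ⟪φ i, e j⟫_ℝ) ^ 2)
      (‖u (e j) - ur (e j)‖ ^ 2) := by
    intro j
    have h2 : HasSum (fun i => if i < r then (σ i * ⟪φ i, e j⟫_ℝ) • ψ i else 0) (ur (e j)) := by
      rw [hur]
      have hsum_eq : ∑ i ∈ Finset.range r, (σ i * ⟪φ i, e j⟫_ℝ) • ψ i
          = ∑ i ∈ Finset.range r, (if i < r then (σ i * ⟪φ i, e j⟫_ℝ) • ψ i else 0) :=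
        Finset.sum_congr rfl fun i hi => by simp [Finset.mem_range.mp hi]
      rw [hsum_eq]
      exact hasSum_sum_of_ne_finset_zero
        (by intro i hi; simp only [Finset.mem_range] at hi; simp [hi])
    have h3 := (hu (e j)).sub h2
    have h4 : (fun i => (σ i * ⟪φ i, e j⟫_ℝ) • ψ i -
        (if i < r then (σ i * ⟪φ i, e j⟫_ℝ) • ψ i else 0))
        = fun i => (if i < r then 0 else σ i * ⟪φ i, e j⟫_ℝ) • ψ i := by
      funext i; split_ifs <;> simp
    rw [h4] at h3
    exact ey_hasSum_sq hψ h3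
  -- part 1
  have hpart1 : (∑' j, ‖u (e j) - ur (e j)‖ ^ 2) = ∑' i, σ (i + r) ^ 2 := by
    set F : ℕ → ℕ → ℝ := fun i j => (if i < r then 0 else σ i * ⟪φ i, e j⟫_ℝ) ^ 2 with hF
    have hFi : ∀ i, HasSum (F i) (if i < r then 0 else σ i ^ 2) := by
      intro i
      by_cases hi : i < r
      · simpa [hF, hi] using hasSum_zero
      · have := (ey_parseval_sq e (φ i)).mul_left (σ i ^ 2)
        rw [hφ.1 i, one_pow, mul_one] at this
        simp only [hF, hi, if_false]
        convert this using 2 with j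
        · rfl
        ring
    have h0 : ∀ i j, 0 ≤ F i j := fun i j => sq_nonneg _
    have hrow : ∀ i, Summable (F i) := fun i => (hFi i).summable
    have hrowsum : (fun i => ∑' j, F i j) = fun i => if i < r then 0 else σ i ^ 2 := by
      funext i; exact (hFi i).tsum_eq
    have hsum : Summable fun i => ∑' j, F i j := by
      rw [hrowsum]
      refine Summable.of_nonneg_of_le (fun i => by positivity) (fun i => ?_) hσ_sq
      split_ifs with h
      · positivity
      · exact le_refl _
    have hswap := ey_tsum_swap h0 hrow hsum
    have hL : (∑' j, ‖u (e j) - ur (e j)‖ ^ 2) = ∑' j, ∑' i, F i j := by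
      refine tsum_congr fun j => ?_
      exact ((hD j).tsum_eq).symm
    rw [hL, hswap, hrowsum]
    have hinj : Function.Injective fun i : ℕ => i + r := add_left_injective r
    have := hinj.tsum_eq (f := fun i => if i < r then (0:ℝ) else σ i ^ 2) ?_
    · rw [← this]
      refine tsum_congr fun i => ?_
      simp [Nat.not_lt.mpr (Nat.le_add_left r i)]
    · intro x hx
      by_cases hxr : x < r
      · simp [hxr] at hx
      · exact ⟨x - r, by simp; omega⟩
  refine ⟨hpart1, ?_⟩
  -- part 2
  intro a b v hv
  -- norms of u (e j)
  have hU : ∀ j, HasSum (fun i => (σ i * ⟪φ i, e j⟫_ℝ) ^ 2) (‖u (e j)‖ ^ 2) :=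
    fun j => ey_hasSum_sq hψ (hu (e j))
  have hUsum : (∑' j, ‖u (e j)‖ ^ 2) = ∑' i, σ i ^ 2 := by
    set F : ℕ → ℕ → ℝ := fun i j => (σ i * ⟪φ i, e j⟫_ℝ) ^ 2 with hF
    have hFi : ∀ i, HasSum (F i) (σ i ^ 2) := by
      intro i
      have := (ey_parseval_sq e (φ i)).mul_left (σ i ^ 2)
      rw [hφ.1 i, one_pow, mul_one] at this
      convert this using 2 with j
      · rfl
      simp only [hF]; ring
    have hrowsum : (fun i => ∑' j, F i j) = fun i => σ i ^ 2 := by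
      funext i; exact (hFi i).tsum_eq
    have hswap := ey_tsum_swap (fun i j => sq_nonneg _) (fun i => (hFi i).summable)
      (by rw [hrowsum]; exact hσ_sq)
    have hL : (∑' j, ‖u (e j)‖ ^ 2) = ∑' j, ∑' i, F i j :=
      tsum_congr fun j => ((hU j).tsum_eq).symm
    rw [hL, hswap, hrowsum]
  -- the subspace spanned by the a's
  set S := Submodule.span ℝ (Set.range a) with hS
  haveI : FiniteDimensional ℝ S := FiniteDimensional.span_of_finite ℝ (Set.finite_range a)
  set n := Module.finrank ℝ S with hn
  have hnr : n ≤ r := by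
    have := finrank_range_le_card (R := ℝ) a
    simpa [Set.finrank, ← hS, ← hn] using this
  set Q := stdOrthonormalBasis ℝ S with hQ
  set q : Fin n → H₁ := fun k => (Q k : H₁) with hqdef
  have hq : Orthonormal ℝ q := by
    rw [orthonormal_iff_ite]
    intro k l
    have h := Q.orthonormal
    rw [orthonormal_iff_ite] at h
    have := h k l
    rwa [Submodule.coe_inner] at this
  -- membership of v (e j) in S, and the pointwise inequality
  have hptwise : ∀ j, ‖u (e j)‖ ^ 2 - ∑ k, ⟪q k, u (e j)⟫_ℝ ^ 2
      ≤ ‖u (e j) - v (e j)‖ ^ 2 := by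
    intro j
    have hmem : v (e j) ∈ S := by
      rw [hv]
      exact Submodule.sum_mem _ fun k _ =>
        Submodule.smul_mem _ _ (Submodule.subset_span ⟨k, rfl⟩)
    have hrepr : v (e j) = ∑ k, Q.repr ⟨v (e j), hmem⟩ k • q k := by
      have h2 : v (e j) = ((∑ k, Q.repr ⟨v (e j), hmem⟩ k • Q k : S) : H₁) :=
        congrArg Subtype.val (Q.sum_repr ⟨v (e j), hmem⟩).symm
      refine h2.trans ?_
      push_cast
      rfl
    calc ‖u (e j)‖ ^ 2 - ∑ k, ⟪q k, u (e j)⟫_ℝ ^ 2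
        ≤ ‖u (e j) - ∑ k, Q.repr ⟨v (e j), hmem⟩ k • q k‖ ^ 2 :=
          ey_dist_sq_ge hq (u (e j)) _
      _ = ‖u (e j) - v (e j)‖ ^ 2 := by rw [← hrepr]
  -- adjoint
  set A := ContinuousLinearMap.adjoint u with hA
  have hadj : ∀ (x : H₁) (g : H₂), ⟪x, u g⟫_ℝ = ⟪A x, g⟫_ℝ := fun x g =>
    (ContinuousLinearMap.adjoint_inner_left u g x).symm
  -- the adjoint's norm via the Schmidt decomposition
  have hAx : ∀ x : H₁, HasSum (fun i => σ i ^ 2 * ⟪x, ψ i⟫_ℝ ^ 2) (‖A x‖ ^ 2) := by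
    intro x
    have h1 : HasSum (fun i => (σ i * ⟪φ i, A x⟫_ℝ) * ⟪x, ψ i⟫_ℝ) ⟪x, u (A x)⟫_ℝ := by
      have := (innerSL ℝ x).hasSum (hu (A x))
      convert this using 2 with i
      · rfl
      simp only [innerSL_apply_apply, real_inner_smul_right]
      rfl
    have huφ : ∀ i, u (φ i) = σ i • ψ i := by
      intro i
      have horth : (fun l => (σ l * ⟪φ l, φ i⟫_ℝ) • ψ l)
          = fun l => if l = i then σ i • ψ i else 0 := by
        funext l
        rcases eq_or_ne l i with rfl | hli
        · simp [hφ.1 l, real_inner_self_eq_norm_sq]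
        · simp [hli, hφ.2 hli]
      have := hu (φ i)
      rw [horth] at this
      exact this.unique (hasSum_ite_eq i (σ i • ψ i))
    have hco : ∀ i, ⟪φ i, A x⟫_ℝ = σ i * ⟪x, ψ i⟫_ℝ := by
      intro i
      rw [real_inner_comm, ← hadj x (φ i), huφ i, real_inner_smul_right]
    have h2 : ⟪x, u (A x)⟫_ℝ = ‖A x‖ ^ 2 := by
      rw [hadj x (A x), real_inner_self_eq_norm_sq]
    rw [h2] at h1
    convert h1 using 2 with i
    rw [hco i]
    ring
  -- column summability and values
  have hcolk : ∀ k : Fin n, HasSum (fun j => ⟪q k, u (e j)⟫_ℝ ^ 2) (‖A (q k)‖ ^ 2) := by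
    intro k
    have := ey_parseval_sq e (A (q k))
    convert this using 2 with j
    rw [← hadj (q k) (e j)]
  -- Bessel-type facts for t i = ∑ k ⟪q k, ψ i⟫²
  set t : ℕ → ℝ := fun i => ∑ k, ⟪q k, ψ i⟫_ℝ ^ 2 with ht
  have hbesselrow : ∀ k : Fin n, Summable fun i => ⟪q k, ψ i⟫_ℝ ^ 2 := by
    intro k
    have := hψ.inner_products_summable (x := q k)
    refine this.congr fun i => ?_
    rw [Real.norm_eq_abs, sq_abs, real_inner_comm]
  have htsummable : Summable t := summable_sum fun k _ => hbesselrow k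
  have ht0 : ∀ i, 0 ≤ t i := fun i => Finset.sum_nonneg fun k _ => sq_nonneg _
  have ht1 : ∀ i, t i ≤ 1 := by
    intro i
    have := hq.sum_inner_products_le (ψ i) (s := Finset.univ)
    rw [hψ.1 i, one_pow] at this
    refine le_trans (le_of_eq ?_) this
    exact Finset.sum_congr rfl fun k _ => by rw [Real.norm_eq_abs, sq_abs]
  have htr : ∑' i, t i ≤ (r : ℝ) := by
    have hswap : ∑' i, t i = ∑ k, ∑' i, ⟪q k, ψ i⟫_ℝ ^ 2 :=
      Summable.tsum_finsetSum fun k _ => hbesselrow k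
    rw [hswap]
    calc ∑ k, ∑' i, ⟪q k, ψ i⟫_ℝ ^ 2 ≤ ∑ k : Fin n, (1 : ℝ) := by
          refine Finset.sum_le_sum fun k _ => ?_
          have := hψ.tsum_inner_products_le (q k)
          rw [hq.1 k, one_pow] at this
          refine le_trans (le_of_eq ?_) this
          exact tsum_congr fun i => by rw [Real.norm_eq_abs, sq_abs, real_inner_comm]
      _ = (n : ℝ) := by simp
      _ ≤ (r : ℝ) := by exact_mod_cast hnr
  -- ∑ₖ ‖A (q k)‖² = ∑' i σ i² * t i
  have hst_row : ∀ k : Fin n, Summable fun i => σ i ^ 2 * ⟪q k, ψ i⟫_ℝ ^ 2 :=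
    fun k => (hAx (q k)).summable
  have hAsum : ∑ k, ‖A (q k)‖ ^ 2 = ∑' i, σ i ^ 2 * t i := by
    have h1 : ∀ k : Fin n, ‖A (q k)‖ ^ 2 = ∑' i, σ i ^ 2 * ⟪q k, ψ i⟫_ℝ ^ 2 :=
      fun k => ((hAx (q k)).tsum_eq).symm
    rw [Finset.sum_congr rfl fun k _ => h1 k, ← Summable.tsum_finsetSum fun k _ => hst_row k]
    refine tsum_congr fun i => ?_
    rw [ht, Finset.mul_sum]
  have hstsummable : Summable fun i => σ i ^ 2 * t i := by
    have := summable_sum fun (k : Fin n) (_ : k ∈ Finset.univ) => hst_row k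
    refine this.congr fun i => ?_
    rw [ht, Finset.mul_sum]
  -- apply rearrangement
  have hkey : ∑ k, ‖A (q k)‖ ^ 2 ≤ ∑ i ∈ Finset.range r, σ i ^ 2 := by
    rw [hAsum]
    refine ey_rearrange (fun i => σ i ^ 2) t ?_ (fun i => sq_nonneg _) ht0 ht1
      htsummable hstsummable r htr
    intro i j hij
    exact pow_le_pow_left₀ (hσ_nonneg j) (hσ_mono hij) 2
  -- summability of the v-distance
  have hHS' : Summable fun j => ‖u (e j)‖ ^ 2 := hHS
  have hvnorm : ∀ j, ‖v (e j)‖ ^ 2 ≤ (r : ℝ) * ∑ k, ⟪b k, e j⟫_ℝ ^ 2 * ‖a k‖ ^ 2 := by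
    intro j
    have h1 : ‖v (e j)‖ ≤ ∑ k, |⟪b k, e j⟫_ℝ| * ‖a k‖ := by
      rw [hv]
      refine le_trans (norm_sum_le _ _) (le_of_eq ?_)
      exact Finset.sum_congr rfl fun k _ => by rw [norm_smul, Real.norm_eq_abs]
    have h2 : ‖v (e j)‖ ^ 2 ≤ (∑ k, |⟪b k, e j⟫_ℝ| * ‖a k‖) ^ 2 :=
      pow_le_pow_left₀ (norm_nonneg _) h1 2
    refine le_trans h2 ?_
    have h3 := sq_sum_le_card_mul_sum_sq
      (s := (Finset.univ : Finset (Fin r))) (f := fun k => |⟪b k, e j⟫_ℝ| * ‖a k‖)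
    refine le_trans h3 (le_of_eq ?_)
    simp only [Finset.card_univ, Fintype.card_fin]
    congr 1
    exact Finset.sum_congr rfl fun k _ => by rw [mul_pow, sq_abs]
  have hvsummable : Summable fun j => ‖v (e j)‖ ^ 2 := by
    refine Summable.of_nonneg_of_le (fun j => sq_nonneg _) hvnorm ?_
    refine Summable.mul_left _ (summable_sum fun k _ => ?_)
    exact (ey_parseval_sq e (b k)).summable.mul_right _
  have hdiffsummable : Summable fun j => ‖u (e j) - v (e j)‖ ^ 2 := by
    refine Summable.of_nonneg_of_le (fun j => sq_nonneg _) (fun j => ?_)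
      ((hHS'.mul_left 2).add (hvsummable.mul_left 2))
    have h1 : ‖u (e j) - v (e j)‖ ≤ ‖u (e j)‖ + ‖v (e j)‖ := norm_sub_le _ _
    have h2 : ‖u (e j) - v (e j)‖ ^ 2 ≤ (‖u (e j)‖ + ‖v (e j)‖) ^ 2 :=
      pow_le_pow_left₀ (norm_nonneg _) h1 2
    nlinarith [sq_nonneg (‖u (e j)‖ - ‖v (e j)‖)]
  -- assemble
  have hGk : Summable fun j => ∑ k, ⟪q k, u (e j)⟫_ℝ ^ 2 :=
    summable_sum fun k _ => (hcolk k).summable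
  have hfinal : (∑' i, σ i ^ 2) - ∑ k, ‖A (q k)‖ ^ 2 ≤ ∑' j, ‖u (e j) - v (e j)‖ ^ 2 := by
    have h1 : ∑' j, (‖u (e j)‖ ^ 2 - ∑ k, ⟪q k, u (e j)⟫_ℝ ^ 2)
        ≤ ∑' j, ‖u (e j) - v (e j)‖ ^ 2 :=
      Summable.tsum_le_tsum hptwise (hHS'.sub hGk) hdiffsummable
    have h2 : ∑' j, (‖u (e j)‖ ^ 2 - ∑ k, ⟪q k, u (e j)⟫_ℝ ^ 2)
        = (∑' j, ‖u (e j)‖ ^ 2) - ∑' j, ∑ k, ⟪q k, u (e j)⟫_ℝ ^ 2 :=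
      Summable.tsum_sub hHS' hGk
    have h3 : ∑' j, ∑ k, ⟪q k, u (e j)⟫_ℝ ^ 2 = ∑ k, ‖A (q k)‖ ^ 2 := by
      rw [Summable.tsum_finsetSum fun k _ => (hcolk k).summable]
      exact Finset.sum_congr rfl fun k _ => (hcolk k).tsum_eq
    rw [h2, h3, hUsum] at h1
    exact h1
  have htailsum : ∑ i ∈ Finset.range r, σ i ^ 2 + ∑' i, σ (i + r) ^ 2 = ∑' i, σ i ^ 2 :=
    Summable.sum_add_tsum_nat_add r hσ_sq
  rw [hpart1]
  have : (∑' i, σ i ^ 2) - ∑ i ∈ Finset.range r, σ i ^ 2 ≤ ∑' j, ‖u (e j) - v (e j)‖ ^ 2 := by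
    refine le_trans (by linarith [hkey]) hfinal
  linarith
end
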